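/- arXiv:2311.09982 — 2 statements merged into one kernel-verified Lean document; each statement's English description precedes it below -/
import Mathlib

section
/- Let p ∈ (1, ∞) and let f : ℝ → ℝ be locally absolutely continuous with derivative f' ∈ L^{p,∞}(ℝ). Then f is Hölder continuous with exponent 1/p': for all x, x' ∈ ℝ, |f(x) − f(x')| ≤ p' ‖f'‖_{p,∞} |x − x'|^{1/p'}. -/
open MeasureTheory Set
open scoped ENNReal NNReal Real

/-- The distribution function of `f`: the Lebesgue measure of `{x : α < |f x|}`. -/
noncomputable def distrib (f : ℝ → ℝ) (α : ℝ) : ℝ≥0∞ := volume {x : ℝ | α < |f x|}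

/-- The decreasing rearrangement `f*(s) = inf {α > 0 : Leb {|f| > α} ≤ s}`
(equal to `∞` if there is no such `α`). -/
noncomputable def decRearr (f : ℝ → ℝ) (s : ℝ) : ℝ≥0∞ :=
  ⨅ (α : ℝ) (_ : 0 < α ∧ distrib f α ≤ ENNReal.ofReal s), ENNReal.ofReal α

/-- The maximal function of the decreasing rearrangement,
`f**(s) = (1/s) ∫₀^s f*(r) dr`. -/
noncomputable def maxRearr (f : ℝ → ℝ) (s : ℝ) : ℝ≥0∞ :=
  (ENNReal.ofReal s)⁻¹ * ∫⁻ r in Set.Ioc (0:ℝ) s, decRearr f r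

/-- The Lorentz norm `‖f‖_{p,q}`:
`(∫₀^∞ (s^{1/p} f**(s))^q ds/s)^{1/q}` for `q < ∞`, and
`sup_{s>0} s^{1/p} f**(s)` for `q = ∞`. -/
noncomputable def lorentzNorm (f : ℝ → ℝ) (p q : ℝ≥0∞) : ℝ≥0∞ :=
  if q = ∞ then ⨆ (s : ℝ) (_ : 0 < s), ENNReal.ofReal s ^ p⁻¹.toReal * maxRearr f s
  else (∫⁻ s in Set.Ioi (0:ℝ),
          (ENNReal.ofReal s ^ p⁻¹.toReal * maxRearr f s) ^ q.toReal
            * (ENNReal.ofReal s)⁻¹) ^ q⁻¹.toReal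

lemma weak_bound (p : ℝ) (hp : 1 < p) (g : ℝ → ℝ)
    (hfin : lorentzNorm g (ENNReal.ofReal p) ∞ ≠ ∞) {α : ℝ} (hα : 0 < α) :
    distrib g α ≤ ENNReal.ofReal (((lorentzNorm g (ENNReal.ofReal p) ∞).toReal / α) ^ p) := by
  set N := lorentzNorm g (ENNReal.ofReal p) ∞ with hN
  set M := N.toReal with hM
  have hp0 : (0:ℝ) < p := by linarith
  have hexp : (ENNReal.ofReal p)⁻¹.toReal = p⁻¹ := by
    rw [ENNReal.toReal_inv, ENNReal.toReal_ofReal hp0.le]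
  have hsup : ∀ s : ℝ, 0 < s → ENNReal.ofReal s ^ p⁻¹ * maxRearr g s ≤ N := by
    intro s hs
    have : ENNReal.ofReal s ^ (ENNReal.ofReal p)⁻¹.toReal * maxRearr g s ≤ N := by
      rw [hN, lorentzNorm, if_pos rfl]
      exact le_iSup₂ (f := fun (s : ℝ) (_ : 0 < s) =>
        ENNReal.ofReal s ^ (ENNReal.ofReal p)⁻¹.toReal * maxRearr g s) s hs
    rwa [hexp] at this
  by_contra hcon
  push_neg at hcon
  obtain ⟨s, hs0, hs1, hs2⟩ := ENNReal.lt_iff_exists_real_btwn.mp hcon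
  have hspos : 0 < s := by
    rcases lt_or_ge 0 s with h | h
    · exact h
    · exfalso
      simp [ENNReal.ofReal_eq_zero.mpr h] at hs1
  -- decRearr g r ≥ ofReal α for r ∈ Ioc 0 s
  have hdec : ∀ r ∈ Ioc (0:ℝ) s, ENNReal.ofReal α ≤ decRearr g r := by
    intro r hr
    refine le_iInf fun β => le_iInf fun hβ => ?_
    have h1 : distrib g β ≤ ENNReal.ofReal r := hβ.2
    have h2 : distrib g β < distrib g α :=
      lt_of_le_of_lt (h1.trans (ENNReal.ofReal_le_ofReal hr.2)) hs2
    by_contra hba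
    push_neg at hba
    have : β ≤ α := by
      by_contra h
      push_neg at h
      exact absurd (ENNReal.ofReal_le_ofReal h.le) (not_le.mpr hba)
    have : distrib g α ≤ distrib g β := by
      apply measure_mono
      intro x hx
      exact lt_of_le_of_lt this hx
    exact absurd h2 (not_lt.mpr this)
  have hmax : ENNReal.ofReal α ≤ maxRearr g s := by
    have h1 : ENNReal.ofReal α * ENNReal.ofReal s ≤ ∫⁻ r in Ioc (0:ℝ) s, decRearr g r := by
      calc ENNReal.ofReal α * ENNReal.ofReal s
          = ∫⁻ _ in Ioc (0:ℝ) s, ENNReal.ofReal α := by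
            rw [setLIntegral_const, Real.volume_Ioc, sub_zero]
        _ ≤ _ := setLIntegral_mono' measurableSet_Ioc hdec
    have hsne : ENNReal.ofReal s ≠ 0 := (ENNReal.ofReal_pos.mpr hspos).ne'
    calc ENNReal.ofReal α = (ENNReal.ofReal s)⁻¹ * (ENNReal.ofReal α * ENNReal.ofReal s) := by
          rw [mul_comm (ENNReal.ofReal α), ← mul_assoc, ENNReal.inv_mul_cancel hsne
            ENNReal.ofReal_ne_top, one_mul]
      _ ≤ maxRearr g s := by
          rw [maxRearr]
          exact mul_le_mul_right h1 _
  have hle : ENNReal.ofReal (s ^ p⁻¹ * α) ≤ N := by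
    rw [ENNReal.ofReal_mul (Real.rpow_nonneg hspos.le _),
      ← ENNReal.ofReal_rpow_of_pos hspos]
    exact le_trans (mul_le_mul_right hmax _) (hsup s hspos)
  have hMle : s ^ p⁻¹ * α ≤ M := by
    have := hle.trans_eq (ENNReal.ofReal_toReal hfin).symm
    exact (ENNReal.ofReal_le_ofReal_iff ENNReal.toReal_nonneg).mp this
  have hsle : s ^ p⁻¹ ≤ M / α := (le_div_iff₀ hα).mpr hMle
  have : s ≤ (M / α) ^ p := by
    calc s = (s ^ p⁻¹) ^ p := (Real.rpow_inv_rpow hspos.le hp0.ne').symm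
      _ ≤ (M / α) ^ p := Real.rpow_le_rpow (Real.rpow_nonneg hspos.le _) hsle hp0.le
  have : ENNReal.ofReal s ≤ ENNReal.ofReal ((M/α)^p) := ENNReal.ofReal_le_ofReal this
  exact absurd hs1 (not_lt.mpr this)

lemma int_bound (p : ℝ) (hp : 1 < p) (M s : ℝ) (hM : 0 ≤ M) (hs : 0 < s) :
    ∫⁻ α in Ioi (0:ℝ), min (ENNReal.ofReal s) (ENNReal.ofReal ((M/α)^p)) ≤
      ENNReal.ofReal (p/(p-1) * M * s ^ (1 - 1/p)) := by
  have hp0 : (0:ℝ) < p := by linarith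
  rcases eq_or_lt_of_le hM with hM0 | hMpos
  · have : ∀ α : ℝ, min (ENNReal.ofReal s) (ENNReal.ofReal ((M/α)^p)) = 0 := by
      intro α
      rw [← hM0, zero_div, Real.zero_rpow hp0.ne']
      simp
    simp only [this, lintegral_zero]
    exact zero_le
  set α₀ : ℝ := M * s ^ (-(1/p)) with hα₀def
  have hα₀ : 0 < α₀ := mul_pos hMpos (Real.rpow_pos_of_pos hs _)
  have hsplit : (Ioi (0:ℝ)) = Ioc 0 α₀ ∪ Ioi α₀ := (Ioc_union_Ioi_eq_Ioi hα₀.le).symm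
  rw [hsplit, lintegral_union measurableSet_Ioi (Ioc_disjoint_Ioi le_rfl)]
  have h1 : ∫⁻ α in Ioc (0:ℝ) α₀, min (ENNReal.ofReal s) (ENNReal.ofReal ((M/α)^p)) ≤
      ENNReal.ofReal (M * s ^ (1 - 1/p)) := by
    calc ∫⁻ α in Ioc (0:ℝ) α₀, min (ENNReal.ofReal s) (ENNReal.ofReal ((M/α)^p))
        ≤ ∫⁻ _ in Ioc (0:ℝ) α₀, ENNReal.ofReal s :=
          setLIntegral_mono' measurableSet_Ioc (fun α _ => min_le_left _ _)
      _ = ENNReal.ofReal s * ENNReal.ofReal α₀ := by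
          rw [setLIntegral_const, Real.volume_Ioc, sub_zero]
      _ = ENNReal.ofReal (M * s ^ (1 - 1/p)) := by
          rw [← ENNReal.ofReal_mul hs.le]
          congr 1
          rw [hα₀def]
          rw [show (1 - 1/p : ℝ) = 1 + (-(1/p)) by ring, Real.rpow_add hs, Real.rpow_one]
          ring
  have h2 : ∫⁻ α in Ioi α₀, min (ENNReal.ofReal s) (ENNReal.ofReal ((M/α)^p)) ≤
      ENNReal.ofReal (1/(p-1) * M * s ^ (1 - 1/p)) := by
    have hint : IntegrableOn (fun α : ℝ => M^p * α ^ (-p)) (Ioi α₀) :=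
      (integrableOn_Ioi_rpow_of_lt (by linarith) hα₀).const_mul _
    calc ∫⁻ α in Ioi α₀, min (ENNReal.ofReal s) (ENNReal.ofReal ((M/α)^p))
        ≤ ∫⁻ α in Ioi α₀, ENNReal.ofReal (M^p * α ^ (-p)) := by
          refine setLIntegral_mono' measurableSet_Ioi (fun α hα => ?_)
          refine le_trans (min_le_right _ _) (ENNReal.ofReal_le_ofReal ?_)
          have hαpos : 0 < α := lt_trans hα₀ hα
          rw [Real.div_rpow hM hαpos.le, Real.rpow_neg hαpos.le, div_eq_mul_inv]
      _ = ENNReal.ofReal (∫ α in Ioi α₀, M^p * α ^ (-p)) := by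
          rw [ofReal_integral_eq_lintegral_ofReal hint]
          filter_upwards [self_mem_ae_restrict measurableSet_Ioi] with α hα
          have hαpos : 0 < α := lt_trans hα₀ hα
          positivity
      _ ≤ ENNReal.ofReal (1/(p-1) * M * s ^ (1 - 1/p)) := by
          apply ENNReal.ofReal_le_ofReal
          rw [integral_const_mul, integral_Ioi_rpow_of_lt (by linarith) hα₀]
          have key : M^p * α₀ ^ (-p + 1) = M * s ^ (1 - 1/p) := by
            have e1 : M ^ p * M ^ (-p + 1) = M := by
              rw [← Real.rpow_add hMpos]; norm_num
            have e2 : (s ^ (-(1/p))) ^ (-p + 1) = s ^ (1 - 1/p) := by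
              rw [← Real.rpow_mul hs.le]
              congr 1
              field_simp
              ring
            rw [hα₀def, Real.mul_rpow hM (Real.rpow_nonneg hs.le _), ← mul_assoc, e1, e2]
          refine le_of_eq ?_
          generalize hA : α₀ ^ (-p + 1) = A at key
          have hne : p - 1 ≠ 0 := by linarith
          have e3 : -A / (-p + 1) = A / (p - 1) := by
            rw [div_eq_div_iff (by linarith) hne]; ring
          rw [e3, show M ^ p * (A / (p-1)) = (M ^ p * A) / (p-1) by ring, key]
          ring
  calc _ ≤ ENNReal.ofReal (M * s ^ (1 - 1/p)) + ENNReal.ofReal (1/(p-1) * M * s ^ (1 - 1/p)) :=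
        add_le_add h1 h2
    _ = ENNReal.ofReal (p/(p-1) * M * s ^ (1 - 1/p)) := by
        rw [← ENNReal.ofReal_add (by positivity)
          (by
            have h1 : (0:ℝ) < p - 1 := by linarith
            positivity)]
        have hne : p - 1 ≠ 0 := by linarith
        have : p/(p-1) = 1 + 1/(p-1) := by field_simp; ring
        rw [this]
        ring

/-- If `f : ℝ → ℝ` is locally absolutely continuous with derivative `g = f'` in weak-`L^p`,
`p ∈ (1,∞)`, then `f` is `1/p'`-Hölder continuous:
`|f x − f x'| ≤ p' ‖f'‖_{p,∞} |x − x'|^{1/p'}`, where `1/p + 1/p' = 1`. -/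
theorem stmt1 (p : ℝ) (hp : 1 < p) (f g : ℝ → ℝ)
    (hg_meas : Measurable g)
    (hg_loc : LocallyIntegrable g volume)
    (hrep : ∀ x y : ℝ, f y - f x = ∫ t in x..y, g t)
    (hfin : lorentzNorm g (ENNReal.ofReal p) ∞ ≠ ∞) :
    ∀ x x' : ℝ, |f x - f x'| ≤
      (p / (p - 1)) * (lorentzNorm g (ENNReal.ofReal p) ∞).toReal * |x - x'| ^ (1 - 1/p) := by
  set N := lorentzNorm g (ENNReal.ofReal p) ∞ with hNdef
  set M := N.toReal with hMdef
  have hM0 : 0 ≤ M := ENNReal.toReal_nonneg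
  have hexp : (0:ℝ) < 1 - 1/p := by
    have : 1/p < 1 := by
      rw [div_lt_one (by linarith)]; linarith
    linarith
  have hC : (0:ℝ) ≤ p/(p-1) := by
    have h1 : (0:ℝ) < p - 1 := by linarith
    positivity
  have key : ∀ a b : ℝ, a ≤ b → |f b - f a| ≤ (p/(p-1)) * M * (b - a) ^ (1 - 1/p) := by
    intro a b hab
    rcases eq_or_lt_of_le hab with rfl | hlt
    · rw [hrep a a, intervalIntegral.integral_same, sub_self, Real.zero_rpow hexp.ne']
      simp
    set s := b - a with hsdef
    have hs : 0 < s := by linarith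
    have habs : |f b - f a| ≤ ∫ t in Set.Ioc a b, |g t| := by
      rw [hrep a b]
      refine le_trans (intervalIntegral.abs_integral_le_integral_abs hab) (le_of_eq ?_)
      rw [intervalIntegral.integral_of_le hab]
    have hgint : IntegrableOn (fun t => |g t|) (Ioc a b) volume :=
      ((hg_loc.integrableOn_isCompact isCompact_Icc).mono_set Ioc_subset_Icc_self).abs
    have heq : ∫ t in Set.Ioc a b, |g t| =
        (∫⁻ t in Set.Ioc a b, ENNReal.ofReal |g t|).toReal := by
      rw [integral_eq_lintegral_of_nonneg_ae (Filter.Eventually.of_forall fun t => abs_nonneg _)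
        (hg_meas.abs.aestronglyMeasurable)]
    have hlayer : ∫⁻ t in Set.Ioc a b, ENNReal.ofReal |g t| =
        ∫⁻ α in Ioi (0:ℝ), (volume.restrict (Ioc a b)) {t : ℝ | α < |g t|} :=
      lintegral_eq_lintegral_meas_lt (volume.restrict (Ioc a b))
        (Filter.Eventually.of_forall fun t => abs_nonneg _) hg_meas.abs.aemeasurable
    have hbound : ∫⁻ α in Ioi (0:ℝ), (volume.restrict (Ioc a b)) {t : ℝ | α < |g t|} ≤
        ENNReal.ofReal (p/(p-1) * M * s ^ (1 - 1/p)) := by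
      refine le_trans (setLIntegral_mono' measurableSet_Ioi fun α hα => ?_)
        (int_bound p hp M s hM0 hs)
      have hSm : MeasurableSet {t : ℝ | α < |g t|} :=
        measurableSet_lt measurable_const hg_meas.abs
      rw [Measure.restrict_apply hSm]
      refine le_min ?_ ?_
      · refine le_trans (measure_mono inter_subset_right) ?_
        rw [Real.volume_Ioc]
      · refine le_trans (measure_mono inter_subset_left) ?_
        exact weak_bound p hp g hfin hα
    calc |f b - f a| ≤ (∫⁻ t in Set.Ioc a b, ENNReal.ofReal |g t|).toReal := heq ▸ habs
      _ ≤ p/(p-1) * M * s ^ (1 - 1/p) :=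
          ENNReal.toReal_le_of_le_ofReal (by positivity) (hlayer ▸ hbound)
  intro x x'
  rcases le_total x' x with h | h
  · have := key x' x h
    rwa [show |x - x'| = x - x' from abs_of_nonneg (by linarith)]
  · have := key x x' h
    rwa [abs_sub_comm (f x), show |x - x'| = x' - x from abs_sub_comm x x' ▸
      abs_of_nonneg (by linarith)]
end

section
/- (Existence of stationary solutions in the subcritical case.) (1) Let p ∈ (2, ∞] and 0 < k < 1 − 1/p; define u(x) = (1 + x²)^{−(1 − 1/p)/(2k)} and b(x) = −((1 − 1/p)/k) · x · (1 + x²)^{−(1 + 1/p)/2}. Then u ∈ L¹(ℝ), b ∈ L^{p,∞}(ℝ), and u is a stationary solution of the PDE: (b(x) u(x)^{1+k})' = u''(x) for all x ∈ ℝ. (2) Similarly, let p ∈ (1, ∞] and 0 < k < 2 − 1/p; define u(x) = (1 + x²)^{−(2 − 1/p)/(2k)} and b(x) = −((2 − 1/p)/k) · x · (1 + x²)^{−1/(2p)}. Then u ∈ L¹(ℝ), b' ∈ L^{p,∞}(ℝ), and (b(x) u(x)^{1+k})' = u''(x) for all x ∈ ℝ. -/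
open MeasureTheory Set
open scoped ENNReal NNReal Real

/- ### Auxiliary lemmas -/

lemma integ_aux (c : ℝ) (hc : 1/2 < c) :
    Integrable (fun x : ℝ => (1 + x^2) ^ (-c)) volume := by
  have h := integrable_rpow_neg_one_add_norm_sq (E := ℝ) (μ := volume) (r := 2*c)
    (by simp; linarith)
  have : (fun x : ℝ => (1 + x^2) ^ (-c)) = fun x : ℝ => ((1:ℝ) + ‖x‖^2) ^ (-(2*c)/2) := by
    funext x
    rw [Real.norm_eq_abs, sq_abs, show -(2*c)/2 = -c by ring]
  rw [this]; exact h

lemma hasDerivAt_u (c : ℝ) (x : ℝ) :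
    HasDerivAt (fun y : ℝ => (1 + y^2) ^ (-c)) (-(2*c) * x * (1 + x^2) ^ (-(c+1))) x := by
  have h1 : HasDerivAt (fun y : ℝ => 1 + y^2) (2*x) x := by
    simpa using ((hasDerivAt_pow 2 x).const_add 1)
  have h2 := h1.rpow_const (p := -c) (Or.inl (by positivity))
  convert h2 using 1
  rw [show -(c+1) = -c - 1 by ring]
  ring

lemma stationary (c k e : ℝ) (he : e = 1 - c*k) (x : ℝ) :
    deriv (fun y : ℝ => (-(2*c) * y * (1 + y^2) ^ (-e)) * ((1 + y^2) ^ (-c)) ^ (1+k)) x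
      = deriv (deriv (fun y : ℝ => (1 + y^2) ^ (-c))) x := by
  have hfun : (fun y : ℝ => (-(2*c) * y * (1 + y^2) ^ (-e)) * ((1 + y^2) ^ (-c)) ^ (1+k))
      = fun y : ℝ => -(2*c) * y * (1 + y^2) ^ (-(c+1)) := by
    funext y
    have hpos : (0:ℝ) < 1 + y^2 := by positivity
    rw [← Real.rpow_mul hpos.le, mul_assoc, ← Real.rpow_add hpos,
      show -e + -c * (1+k) = -(c+1) by rw [he]; ring]
  have hderiv : deriv (fun y : ℝ => (1 + y^2) ^ (-c))
      = fun y : ℝ => -(2*c) * y * (1 + y^2) ^ (-(c+1)) :=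
    funext fun y => (hasDerivAt_u c y).deriv
  rw [hfun, hderiv]

lemma lorentz_finite (p : ℝ≥0∞) (f : ℝ → ℝ) (C : ℝ) (hC : 0 < C)
    (ht1 : p⁻¹.toReal < 1)
    (hb : ∀ x, |f x| ≤ C)
    (hd : ∀ x : ℝ, x ≠ 0 → |f x| ≤ C * |x| ^ (-(p⁻¹.toReal))) :
    lorentzNorm f p ∞ ≠ ∞ := by
  set t := p⁻¹.toReal with htdef
  have ht0 : 0 ≤ t := ENNReal.toReal_nonneg
  rw [lorentzNorm, if_pos rfl]
  rcases eq_or_lt_of_le ht0 with h0 | hpos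
  · -- t = 0 : bounded case
    have hdec : ∀ r : ℝ, decRearr f r ≤ ENNReal.ofReal C := by
      intro r
      refine iInf₂_le C ⟨hC, ?_⟩
      have : {x : ℝ | C < |f x|} = ∅ := by
        ext x; simp only [mem_setOf_eq, mem_empty_iff_false, iff_false, not_lt]
        exact hb x
      rw [distrib, this]
      simp
    have hterm : ∀ s : ℝ, 0 < s →
        ENNReal.ofReal s ^ t * maxRearr f s ≤ ENNReal.ofReal C := by
      intro s hs
      rw [← h0, ENNReal.rpow_zero, one_mul]
      calc maxRearr f s
          ≤ (ENNReal.ofReal s)⁻¹ * ∫⁻ r in Set.Ioc (0:ℝ) s, ENNReal.ofReal C :=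
            mul_le_mul_right (lintegral_mono fun r => hdec r) _
        _ = (ENNReal.ofReal s)⁻¹ * (ENNReal.ofReal C * ENNReal.ofReal s) := by
            rw [setLIntegral_const, Real.volume_Ioc, sub_zero]
        _ = ENNReal.ofReal C := by
            rw [mul_comm (ENNReal.ofReal C), ← mul_assoc,
              ENNReal.inv_mul_cancel (by simpa using hs) ENNReal.ofReal_ne_top, one_mul]
    exact (lt_of_le_of_lt (iSup₂_le hterm) ENNReal.ofReal_lt_top).ne
  · -- t > 0
    have hdec : ∀ r : ℝ, 0 < r → decRearr f r ≤ ENNReal.ofReal (C * 2^t * r^(-t)) := by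
      intro r hr
      have h2t : (0:ℝ) < (2:ℝ)^t := Real.rpow_pos_of_pos (by norm_num) t
      have hrt : (0:ℝ) < r^(-t) := Real.rpow_pos_of_pos hr _
      refine iInf₂_le _ ⟨by positivity, ?_⟩
      have hsub : {x : ℝ | C * 2^t * r^(-t) < |f x|} ⊆ Set.Ioo (-(r/2)) (r/2) := by
        intro x hx
        simp only [mem_setOf_eq] at hx
        rw [Set.mem_Ioo, ← abs_lt]
        by_contra hmem
        push_neg at hmem
        have hx2 : r/2 ≤ |x| := hmem
        have hxne : x ≠ 0 := by
          intro h; rw [h, abs_zero] at hx2; linarith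
        have h1 : |x| ^ (-t) ≤ (r/2) ^ (-t) :=
          Real.rpow_le_rpow_of_nonpos (by linarith) hx2 (by linarith)
        have h2 : ((r:ℝ)/2) ^ (-t) = 2^t * r^(-t) := by
          rw [Real.div_rpow hr.le (by norm_num), Real.rpow_neg (by norm_num : (0:ℝ) ≤ 2),
            div_inv_eq_mul]
          ring
        have h3 := hd x hxne
        have h4 : C * |x| ^ (-t) ≤ C * (2^t * r^(-t)) := by
          rw [← h2]; exact mul_le_mul_of_nonneg_left h1 hC.le
        rw [← mul_assoc] at h4
        linarith
      calc distrib f (C * 2^t * r^(-t)) ≤ volume (Set.Ioo (-(r/2)) (r/2)) :=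
            measure_mono hsub
        _ = ENNReal.ofReal r := by rw [Real.volume_Ioo]; congr 1; ring
    have hint : ∀ s : ℝ, 0 < s →
        (∫⁻ r in Set.Ioc (0:ℝ) s, decRearr f r)
          ≤ ENNReal.ofReal (C * 2^t * (s^(1-t)/(1-t))) := by
      intro s hs
      have hmeas : Measurable (fun r : ℝ => ENNReal.ofReal (C * 2^t * r^(-t))) := by
        fun_prop
      have step1 : (∫⁻ r in Set.Ioc (0:ℝ) s, decRearr f r)
          ≤ ∫⁻ r in Set.Ioc (0:ℝ) s, ENNReal.ofReal (C * 2^t * r^(-t)) :=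
        setLIntegral_mono hmeas (fun r hr => hdec r hr.1)
      have hInteg : IntegrableOn (fun r : ℝ => C * 2^t * r^(-t)) (Set.Ioc 0 s) volume := by
        have h := (intervalIntegral.intervalIntegrable_rpow'
          (a := 0) (b := s) (r := -t) (by linarith)).const_mul (C * 2^t)
        simpa [intervalIntegrable_iff_integrableOn_Ioc_of_le hs.le] using h
      have step2 : (∫⁻ r in Set.Ioc (0:ℝ) s, ENNReal.ofReal (C * 2^t * r^(-t)))
          = ENNReal.ofReal (∫ r in Set.Ioc (0:ℝ) s, C * 2^t * r^(-t)) := by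
        rw [← ofReal_integral_eq_lintegral_ofReal hInteg]
        filter_upwards [ae_restrict_mem measurableSet_Ioc] with r hr
        have : (0:ℝ) < r := hr.1
        positivity
      have step3 : (∫ r in Set.Ioc (0:ℝ) s, C * 2^t * r^(-t))
          = C * 2^t * (s^(1-t)/(1-t)) := by
        rw [← intervalIntegral.integral_of_le hs.le, intervalIntegral.integral_const_mul,
          integral_rpow (Or.inl (by linarith : (-1:ℝ) < -t)),
          Real.zero_rpow (by intro h; rw [show -t+1 = 1-t by ring] at h; linarith),
          show -t + 1 = 1 - t by ring]
        ring
      rw [← step3, ← step2]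
      exact step1
    have hterm : ∀ s : ℝ, 0 < s →
        ENNReal.ofReal s ^ t * maxRearr f s ≤ ENNReal.ofReal (C * 2^t / (1-t)) := by
      intro s hs
      have h1 : maxRearr f s
          ≤ ENNReal.ofReal s⁻¹ * ENNReal.ofReal (C*2^t*(s^(1-t)/(1-t))) := by
        rw [show ENNReal.ofReal s⁻¹ = (ENNReal.ofReal s)⁻¹ from ENNReal.ofReal_inv_of_pos hs]
        exact mul_le_mul_right (hint s hs) _
      calc ENNReal.ofReal s ^ t * maxRearr f s
          ≤ ENNReal.ofReal s ^ t
              * (ENNReal.ofReal s⁻¹ * ENNReal.ofReal (C*2^t*(s^(1-t)/(1-t)))) :=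
            mul_le_mul_right h1 _
        _ = ENNReal.ofReal (s^t * (s⁻¹ * (C*2^t*(s^(1-t)/(1-t))))) := by
            rw [ENNReal.ofReal_rpow_of_pos hs, ← ENNReal.ofReal_mul (by positivity),
              ← ENNReal.ofReal_mul (by positivity)]
        _ = ENNReal.ofReal (C * 2^t / (1-t)) := by
            congr 1
            have hst : s^t * s^(1-t) = s := by
              rw [← Real.rpow_add hs, show t + (1-t) = 1 by ring, Real.rpow_one]
            rw [show s^t * (s⁻¹ * (C*2^t*(s^(1-t)/(1-t))))
              = (s^t*s^(1-t)) * s⁻¹ * (C*2^t/(1-t)) by ring, hst,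
              mul_inv_cancel₀ hs.ne', one_mul]
    exact (lt_of_le_of_lt (iSup₂_le hterm) ENNReal.ofReal_lt_top).ne

lemma aux_base {x : ℝ} (e : ℝ) (hx : x ≠ 0) (he : 0 ≤ e) :
    (1 + x^2) ^ (-e) ≤ |x| ^ (-(2*e)) := by
  have h2 : (0:ℝ) < x^2 := by positivity
  have key : (x^2 : ℝ) ^ (-e) = |x| ^ (-(2*e)) := by
    rw [← sq_abs, ← Real.rpow_natCast |x| 2, ← Real.rpow_mul (abs_nonneg x)]
    norm_num
  rw [← key]
  exact Real.rpow_le_rpow_of_nonpos h2 (by linarith) (by linarith)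

lemma aux_one {x : ℝ} (e : ℝ) (he : 0 ≤ e) : (1 + x^2) ^ (-e) ≤ 1 :=
  Real.rpow_le_one_of_one_le_of_nonpos (by nlinarith) (by linarith)

lemma b1_abs (c t x : ℝ) (hc : 0 < c) :
    |(-(2*c) * x * (1 + x^2) ^ (-((1+t)/2)))|
      = 2*c * (|x| * (1 + x^2) ^ (-((1+t)/2))) := by
  have hpos : (0:ℝ) < 1 + x^2 := by positivity
  rw [abs_mul, abs_mul, abs_neg, abs_of_pos (by linarith : (0:ℝ) < 2*c),
    abs_of_pos (Real.rpow_pos_of_pos hpos _), mul_assoc]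

lemma b1_bounded (c t x : ℝ) (hc : 0 < c) (ht0 : 0 ≤ t) :
    |(-(2*c) * x * (1 + x^2) ^ (-((1+t)/2)))| ≤ 2*c := by
  have hpos : (0:ℝ) < 1 + x^2 := by positivity
  have hA : (0:ℝ) < (1+x^2)^((1+t)/2) := Real.rpow_pos_of_pos hpos _
  have hx : |x| ≤ (1+x^2)^((1+t)/2) := by
    calc |x| = Real.sqrt (x^2) := (Real.sqrt_sq_eq_abs x).symm
      _ ≤ Real.sqrt (1+x^2) := Real.sqrt_le_sqrt (by linarith)
      _ = (1+x^2)^((1:ℝ)/2) := Real.sqrt_eq_rpow _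
      _ ≤ (1+x^2)^((1+t)/2) := Real.rpow_le_rpow_of_exponent_le (by nlinarith) (by linarith)
  rw [b1_abs c t x hc, Real.rpow_neg hpos.le, ← div_eq_mul_inv]
  nth_rewrite 2 [← mul_one (2*c)]
  exact mul_le_mul_of_nonneg_left ((div_le_one hA).2 hx) (by linarith)

lemma b1_decay (c t x : ℝ) (hc : 0 < c) (ht0 : 0 ≤ t) (hx : x ≠ 0) :
    |(-(2*c) * x * (1 + x^2) ^ (-((1+t)/2)))| ≤ 2*c * |x| ^ (-t) := by
  have h1 : (1+x^2)^(-((1+t)/2)) ≤ |x|^(-(2*((1+t)/2))) := aux_base _ hx (by linarith)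
  have h2 : |x| * |x|^(-(2*((1+t)/2))) = |x|^(-t) := by
    nth_rewrite 1 [← Real.rpow_one |x|]
    rw [← Real.rpow_add (abs_pos.2 hx), show (1:ℝ) + -(2*((1+t)/2)) = -t by ring]
  rw [b1_abs c t x hc, ← h2]
  exact mul_le_mul_of_nonneg_left
    (mul_le_mul_of_nonneg_left h1 (abs_nonneg x)) (by linarith)

lemma hasDerivAt_b2 (c t x : ℝ) :
    HasDerivAt (fun y : ℝ => -(2*c) * y * (1 + y^2) ^ (-(t/2)))
      (-(2*c) * ((1 + x^2) ^ (-(t/2)) - t * x^2 * (1 + x^2) ^ (-(t/2)-1))) x := by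
  have h1 : HasDerivAt (fun y : ℝ => -(2*c) * y) (-(2*c)) x := by
    simpa using (hasDerivAt_id x).const_mul (-(2*c))
  have hin : HasDerivAt (fun y : ℝ => 1 + y^2) (2*x) x := by
    simpa using ((hasDerivAt_pow 2 x).const_add 1)
  have h2 := hin.rpow_const (p := -(t/2)) (Or.inl (by positivity))
  have h3 : HasDerivAt (fun y : ℝ => -(2*c) * y * (1 + y^2) ^ (-(t/2))) _ x := h1.mul h2
  convert h3 using 1
  ring

lemma b2_abs (c t x : ℝ) (hc : 0 < c) (ht0 : 0 ≤ t) (ht1 : t ≤ 1) :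
    |(-(2*c) * ((1 + x^2) ^ (-(t/2)) - t * x^2 * (1 + x^2) ^ (-(t/2)-1)))|
      ≤ 2*c * (1 + x^2) ^ (-(t/2)) := by
  have hpos : (0:ℝ) < 1 + x^2 := by positivity
  have hA : (0:ℝ) < (1+x^2) ^ (-(t/2)) := Real.rpow_pos_of_pos hpos _
  have hsplit : (1+x^2) ^ (-(t/2)) = (1+x^2) * (1+x^2) ^ (-(t/2)-1) := by
    nth_rewrite 1 [show -(t/2) = 1 + (-(t/2)-1) by ring]
    rw [Real.rpow_add hpos, Real.rpow_one]
  have hB : (0:ℝ) ≤ t * x^2 * (1+x^2) ^ (-(t/2)-1) := by positivity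
  have hBA : t * x^2 * (1+x^2) ^ (-(t/2)-1) ≤ (1+x^2) ^ (-(t/2)) := by
    rw [hsplit]
    exact mul_le_mul_of_nonneg_right (by nlinarith)
      (Real.rpow_nonneg hpos.le _)
  rw [abs_mul, abs_neg, abs_of_pos (by linarith : (0:ℝ) < 2*c)]
  exact mul_le_mul_of_nonneg_left
    (abs_le.2 ⟨by linarith, by linarith⟩) (by linarith)

/-- Existence of stationary solutions in the subcritical case.
(1) For `p ∈ (2,∞]`, `0 < k < 1 − 1/p`, the function `u(x) = (1+x²)^{−(1−1/p)/(2k)}`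
is integrable, the drift `b(x) = −((1−1/p)/k) x (1+x²)^{−(1+1/p)/2}` is in `L^{p,∞}`,
and `(b u^{1+k})' = u''` everywhere.
(2) For `p ∈ (1,∞]`, `0 < k < 2 − 1/p`, the function `u(x) = (1+x²)^{−(2−1/p)/(2k)}`
is integrable, the drift `b(x) = −((2−1/p)/k) x (1+x²)^{−1/(2p)}` has `b' ∈ L^{p,∞}`,
and `(b u^{1+k})' = u''` everywhere. -/
theorem stmt18 :
    (∀ p : ℝ≥0∞, 2 < p → ∀ k : ℝ, 0 < k → k < 1 - p⁻¹.toReal →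
      Integrable (fun x : ℝ => (1 + x^2) ^ (-((1 - p⁻¹.toReal)/(2*k)))) volume ∧
      lorentzNorm
        (fun x : ℝ => -((1 - p⁻¹.toReal)/k) * x * (1 + x^2) ^ (-((1 + p⁻¹.toReal)/2)))
        p ∞ ≠ ∞ ∧
      ∀ x : ℝ,
        deriv (fun y : ℝ =>
            (-((1 - p⁻¹.toReal)/k) * y * (1 + y^2) ^ (-((1 + p⁻¹.toReal)/2)))
              * ((1 + y^2) ^ (-((1 - p⁻¹.toReal)/(2*k)))) ^ (1 + k)) x
          = deriv (deriv (fun y : ℝ => (1 + y^2) ^ (-((1 - p⁻¹.toReal)/(2*k))))) x) ∧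
    (∀ p : ℝ≥0∞, 1 < p → ∀ k : ℝ, 0 < k → k < 2 - p⁻¹.toReal →
      Integrable (fun x : ℝ => (1 + x^2) ^ (-((2 - p⁻¹.toReal)/(2*k)))) volume ∧
      lorentzNorm
        (deriv (fun x : ℝ => -((2 - p⁻¹.toReal)/k) * x * (1 + x^2) ^ (-(p⁻¹.toReal/2))))
        p ∞ ≠ ∞ ∧
      ∀ x : ℝ,
        deriv (fun y : ℝ =>
            (-((2 - p⁻¹.toReal)/k) * y * (1 + y^2) ^ (-(p⁻¹.toReal/2)))
              * ((1 + y^2) ^ (-((2 - p⁻¹.toReal)/(2*k)))) ^ (1 + k)) x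
          = deriv (deriv (fun y : ℝ => (1 + y^2) ^ (-((2 - p⁻¹.toReal)/(2*k))))) x) := by
  constructor
  · intro p hp k hk hk2
    set t := p⁻¹.toReal with htdef
    have ht0 : 0 ≤ t := ENNReal.toReal_nonneg
    have ht1 : t < 1 := by linarith
    have hco : (1 - t)/k = 2*((1 - t)/(2*k)) := by field_simp
    have hc : (0:ℝ) < (1 - t)/(2*k) := by
      apply div_pos (by linarith) (by linarith)
    refine ⟨integ_aux _ ?_, ?_, ?_⟩
    · rw [lt_div_iff₀ (by linarith : (0:ℝ) < 2*k)]; linarith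
    · rw [hco]
      refine lorentz_finite p _ (2*((1 - t)/(2*k))) (by linarith) ht1
        (fun x => ?_) (fun x hx => ?_)
      · exact b1_bounded _ t x hc ht0
      · exact b1_decay _ t x hc ht0 hx
    · intro x
      rw [hco]
      exact stationary ((1 - t)/(2*k)) k ((1 + t)/2) (by field_simp; ring) x
  · intro p hp k hk hk2
    set t := p⁻¹.toReal with htdef
    have ht0 : 0 ≤ t := ENNReal.toReal_nonneg
    have ht1 : t < 1 := by
      have h1 : p⁻¹ < 1 := ENNReal.inv_lt_one.2 hp
      exact ENNReal.toReal_lt_of_lt_ofReal (by rwa [ENNReal.ofReal_one])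
    have hco : (2 - t)/k = 2*((2 - t)/(2*k)) := by field_simp
    have hc : (0:ℝ) < (2 - t)/(2*k) := by
      apply div_pos (by linarith) (by linarith)
    refine ⟨integ_aux _ ?_, ?_, ?_⟩
    · rw [lt_div_iff₀ (by linarith : (0:ℝ) < 2*k)]; linarith
    · rw [hco]
      have hder : deriv (fun x : ℝ => -(2*((2 - t)/(2*k))) * x * (1 + x^2) ^ (-(t/2)))
          = fun x : ℝ => -(2*((2 - t)/(2*k)))
              * ((1 + x^2) ^ (-(t/2)) - t * x^2 * (1 + x^2) ^ (-(t/2)-1)) :=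
        funext fun x => (hasDerivAt_b2 _ t x).deriv
      rw [hder]
      refine lorentz_finite p _ (2*((2 - t)/(2*k))) (by linarith) ht1
        (fun x => ?_) (fun x hx => ?_)
      · exact le_trans (b2_abs _ t x hc ht0 ht1.le)
          (by
            nth_rewrite 2 [← mul_one (2*((2 - t)/(2*k)))]
            exact mul_le_mul_of_nonneg_left (aux_one _ (by linarith)) (by linarith))
      · refine le_trans (b2_abs _ t x hc ht0 ht1.le) ?_
        have h := aux_base (x := x) (t/2) hx (by linarith)
        rw [show -(2*(t/2)) = -t by ring] at h
        exact mul_le_mul_of_nonneg_left h (by linarith)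
    · intro x
      rw [hco]
      exact stationary ((2 - t)/(2*k)) k (t/2) (by field_simp; ring) x
end
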